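/- If a preference profile satisfies MaxProp, then it has a unique stable matching (it is in the class USM). -/

import Mathlib

open scoped Classical

noncomputable section

/-- A two-sided matching market with `n` men and `n` women, each with a complete
strict preference order over the other side. `mpref m k` is man `m`'s `k`-th
favourite woman (0 = top), and `wpref w k` is woman `w`'s `k`-th favourite man. -/
structure Profile (n : ℕ) where
  mpref : Fin n → (Fin n ≃ Fin n)
  wpref : Fin n → (Fin n ≃ Fin n)

namespace Profile

variable {n : ℕ}

/-- rank (0 = best) of woman `w` in man `m`'s preference list -/
def mrank (P : Profile n) (m w : Fin n) : ℕ := ((P.mpref m).symm w : ℕ)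

/-- rank (0 = best) of man `m` in woman `w`'s preference list -/
def wrank (P : Profile n) (w m : Fin n) : ℕ := ((P.wpref w).symm m : ℕ)

/-- man `m` strictly prefers woman `w` to woman `w'` -/
def mPrefers (P : Profile n) (m w w' : Fin n) : Prop := P.mrank m w < P.mrank m w'

/-- woman `w` strictly prefers man `m` to man `m'` -/
def wPrefers (P : Profile n) (w m m' : Fin n) : Prop := P.wrank w m < P.wrank w m'

/-- top choice of man `m` -/
def topM (P : Profile n) (m : Fin n) : Fin n := P.mpref m ⟨0, m.pos⟩

/-- top choice of woman `w` -/
def topW (P : Profile n) (w : Fin n) : Fin n := P.wpref w ⟨0, w.pos⟩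

/-- the profile with the roles of men and women exchanged -/
def swap (P : Profile n) : Profile n := ⟨P.wpref, P.mpref⟩

/-- State of the men-proposing deferred acceptance algorithm:
`next m` = number of proposals man `m` has made so far,
`held w` = the man woman `w` currently tentatively holds (if any). -/
structure DAState (n : ℕ) where
  next : Fin n → ℕ
  held : Fin n → Option (Fin n)

def initState (n : ℕ) : DAState n := ⟨fun _ => 0, fun _ => none⟩

/-- the men currently unmatched (held by no woman) -/
def unmatched (s : DAState n) : Finset (Fin n) :=
  Finset.univ.filter fun m => ∀ w : Fin n, s.held w ≠ some m

/-- the woman man `m` proposes to next: his most preferred woman among those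
who have not rejected him yet -/
def target (P : Profile n) (s : DAState n) (m : Fin n) : Fin n :=
  P.mpref m ⟨s.next m % n, Nat.mod_lt _ m.pos⟩

/-- the men proposing to woman `w` in the current round -/
def proposers (P : Profile n) (s : DAState n) (w : Fin n) : Finset (Fin n) :=
  (unmatched s).filter fun m => target P s m = w

/-- one round of the men-proposing deferred acceptance algorithm: every
unmatched man proposes to his favourite woman who has not rejected him yet,
and every woman tentatively holds her favourite among her current partner
and the new proposers, rejecting the rest -/
def step (P : Profile n) (s : DAState n) : DAState n where
  next := fun m => if m ∈ unmatched s then s.next m + 1 else s.next m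
  held := fun w => ((proposers P s w ∪ (s.held w).toFinset).toList).argmin (P.wrank w)

/-- the state after `k` rounds of men-proposing deferred acceptance -/
def stateAt (P : Profile n) (k : ℕ) : DAState n := (step P)^[k] (initState n)

/-- the final state of men-proposing deferred acceptance
(`n * n + 1` iterations is always enough to reach the fixed point) -/
def finalState (P : Profile n) : DAState n := stateAt P (n * n + 1)

/-- total number of proposals made during the men-proposing DA -/
def totalProposals (P : Profile n) : ℕ := ∑ m : Fin n, (finalState P).next m

/-- number of rounds of the men-proposing DA (rounds in which some proposal is made) -/
def rounds (P : Profile n) : ℕ :=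
  ((Finset.range (n * n + 1)).filter fun k => (unmatched (stateAt P k)).Nonempty).card

/-- total number of proposals received by woman `w` during the men-proposing DA -/
def proposalsTo (P : Profile n) (w : Fin n) : ℕ :=
  ∑ k ∈ Finset.range (n * n + 1), (proposers P (stateAt P k) w).card

/-- man `m` proposes to woman `w` at some point during the men-proposing DA -/
def proposedTo (P : Profile n) (m w : Fin n) : Prop :=
  ∃ k < n * n + 1, m ∈ proposers P (stateAt P k) w

/-- the men-proposing DA makes the maximum possible number `n² - n + 1` of proposals -/
def MaxProp (P : Profile n) : Prop := P.totalProposals = n * n + 1 - n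

/-- the men-proposing DA takes the maximum possible number `n² - 2n + 2` of rounds -/
def MaxRou (P : Profile n) : Prop := P.rounds = n * n + 2 - 2 * n

/-- a matching (a bijection man ↦ woman) is stable iff no man-woman pair mutually
prefer each other to their assigned partners -/
def Stable (P : Profile n) (μ : Fin n ≃ Fin n) : Prop :=
  ¬ ∃ (m w : Fin n), P.mPrefers m w (μ m) ∧ P.wPrefers w m (μ.symm w)

/-- the profile admits a unique stable matching -/
def USM (P : Profile n) : Prop := ∃! μ : Fin n ≃ Fin n, P.Stable μ

/-- the sequential preference condition of Eeckhout (2000) -/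
def SPC (P : Profile n) : Prop :=
  ∃ σ τ : Equiv.Perm (Fin n), ∀ i j : Fin n, i < j →
    P.mPrefers (σ i) (τ i) (τ j) ∧ P.wPrefers (τ i) (σ i) (σ j)

/-- the no crossing condition of Clark (2006) -/
def NCC (P : Profile n) : Prop :=
  ∃ σ τ : Equiv.Perm (Fin n), ∀ i j k l : Fin n, i < j → k < l →
    (P.mPrefers (σ i) (τ l) (τ k) → P.mPrefers (σ j) (τ l) (τ k)) ∧
    (P.wPrefers (τ k) (σ j) (σ i) → P.wPrefers (τ l) (σ j) (σ i))

end Profile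
namespace Profile

variable {n : ℕ} (P : Profile n)

lemma mrank_lt (m w : Fin n) : P.mrank m w < n := ((P.mpref m).symm w).isLt

lemma wrank_lt (w m : Fin n) : P.wrank w m < n := ((P.wpref w).symm m).isLt

lemma mrank_inj {m w w' : Fin n} (h : P.mrank m w = P.mrank m w') : w = w' :=
  (P.mpref m).symm.injective (Fin.val_injective h)

lemma wrank_inj {w m m' : Fin n} (h : P.wrank w m = P.wrank w m') : m = m' :=
  (P.wpref w).symm.injective (Fin.val_injective h)

lemma mrank_mpref (m : Fin n) (j : Fin n) : P.mrank m (P.mpref m j) = j := by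
  simp [mrank]

lemma mpref_eq_of_mrank {m w : Fin n} {j : ℕ} (hj : j < n) (h : P.mrank m w = j) :
    P.mpref m ⟨j, hj⟩ = w := by
  have : (⟨j, hj⟩ : Fin n) = (P.mpref m).symm w := by
    apply Fin.ext; simpa [mrank] using h.symm
  rw [this, Equiv.apply_symm_apply]

lemma mem_unmatched {s : DAState n} {m : Fin n} :
    m ∈ unmatched s ↔ ∀ w, s.held w ≠ some m := by
  simp [unmatched]

lemma not_unmatched_of_held {s : DAState n} {m w : Fin n} (h : s.held w = some m) :
    m ∉ unmatched s := fun hm => (mem_unmatched.mp hm w) h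

lemma mem_proposers {s : DAState n} {m w : Fin n} :
    m ∈ P.proposers s w ↔ m ∈ unmatched s ∧ P.target s m = w := by
  simp [proposers]

lemma target_eq {s : DAState n} {m : Fin n} (hlt : s.next m < n) :
    P.target s m = P.mpref m ⟨s.next m, hlt⟩ := by
  simp [target, Nat.mod_eq_of_lt hlt]

lemma mem_heldList {s : DAState n} {w m : Fin n} :
    m ∈ (P.proposers s w ∪ (s.held w).toFinset).toList ↔
      m ∈ P.proposers s w ∨ s.held w = some m := by
  simp [Finset.mem_toList, Option.mem_toFinset, Option.mem_def]

lemma step_next (s : DAState n) (m : Fin n) :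
    (P.step s).next m = if m ∈ unmatched s then s.next m + 1 else s.next m := rfl

lemma step_held_cases {s : DAState n} {w m' : Fin n} (h : (P.step s).held w = some m') :
    m' ∈ P.proposers s w ∨ s.held w = some m' := by
  have hmem : m' ∈ ((P.proposers s w ∪ (s.held w).toFinset).toList).argmin (P.wrank w) :=
    Option.mem_def.mpr h
  exact (P.mem_heldList).mp (List.argmin_mem hmem)

lemma step_held_min {s : DAState n} {w m : Fin n}
    (h : m ∈ P.proposers s w ∨ s.held w = some m) :
    ∃ m', (P.step s).held w = some m' ∧ P.wrank w m' ≤ P.wrank w m := by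
  have hm : m ∈ (P.proposers s w ∪ (s.held w).toFinset).toList := (P.mem_heldList).mpr h
  cases h' : ((P.proposers s w ∪ (s.held w).toFinset).toList).argmin (P.wrank w) with
  | none => exact absurd (List.argmin_eq_none.mp h') (List.ne_nil_of_mem hm)
  | some m' =>
    exact ⟨m', h', List.le_of_mem_argmin hm (Option.mem_def.mpr h')⟩

/-- The invariant of the DA algorithm. -/
def Inv (s : DAState n) : Prop :=
  (∀ m w, P.mrank m w < s.next m → ∃ m', s.held w = some m' ∧ P.wrank w m' ≤ P.wrank w m) ∧
  (∀ m w, s.held w = some m → s.next m = P.mrank m w + 1) ∧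
  (∀ m, s.next m ≤ n) ∧
  (∀ m w w', s.held w = some m → s.held w' = some m → w = w')

lemma next_lt_of_unmatched {s : DAState n} (hI : P.Inv s) {m : Fin n}
    (hm : m ∈ unmatched s) : s.next m < n := by
  by_contra hn
  push_neg at hn
  have hall : ∀ w : Fin n, (s.held w).isSome := by
    intro w
    obtain ⟨m', h', -⟩ := hI.1 m w (lt_of_lt_of_le (P.mrank_lt m w) hn)
    simp [h']
  have hf : ∀ w : Fin n, s.held w = some ((s.held w).get (hall w)) := fun w =>
    (Option.some_get (hall w)).symm
  have finj : Function.Injective (fun w : Fin n => (s.held w).get (hall w)) := by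
    intro w w' hww
    simp only at hww
    exact hI.2.2.2 _ w w' (hf w) (by rw [hww]; exact hf w')
  obtain ⟨w, hw⟩ := Finite.surjective_of_injective finj m
  simp only at hw
  exact not_unmatched_of_held (by rw [hf w, hw]) hm

lemma inv_step {s : DAState n} (hI : P.Inv s) : P.Inv (P.step s) := by
  obtain ⟨I1, I2, I3, I4⟩ := hI
  refine ⟨?_, ?_, ?_, ?_⟩
  · intro m w hlt
    rw [step_next] at hlt
    by_cases hm : m ∈ unmatched s
    · rw [if_pos hm] at hlt
      rcases Nat.lt_or_ge (P.mrank m w) (s.next m) with hc | hc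
      · obtain ⟨m'', h'', hle''⟩ := I1 m w hc
        obtain ⟨m', h', hle'⟩ := P.step_held_min (Or.inr h'')
        exact ⟨m', h', le_trans hle' hle''⟩
      · have heq : P.mrank m w = s.next m := by omega
        have hn := P.next_lt_of_unmatched ⟨I1, I2, I3, I4⟩ hm
        have htar : P.target s m = w := by
          rw [P.target_eq hn]
          exact P.mpref_eq_of_mrank hn heq
        have hp : m ∈ P.proposers s w := (P.mem_proposers).mpr ⟨hm, htar⟩
        obtain ⟨m', h', hle'⟩ := P.step_held_min (Or.inl hp)
        exact ⟨m', h', hle'⟩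
    · rw [if_neg hm] at hlt
      obtain ⟨m'', h'', hle''⟩ := I1 m w hlt
      obtain ⟨m', h', hle'⟩ := P.step_held_min (Or.inr h'')
      exact ⟨m', h', le_trans hle' hle''⟩
  · intro m w h
    rcases P.step_held_cases h with hp | hh
    · obtain ⟨hm, htar⟩ := (P.mem_proposers).mp hp
      have hn := P.next_lt_of_unmatched ⟨I1, I2, I3, I4⟩ hm
      rw [P.target_eq hn] at htar
      have : P.mrank m w = s.next m := by
        rw [← htar]; simpa using P.mrank_mpref m ⟨s.next m, hn⟩
      rw [step_next, if_pos hm, this]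
    · have hm := not_unmatched_of_held hh
      rw [step_next, if_neg hm]
      exact I2 m w hh
  · intro m
    rw [step_next]
    by_cases hm : m ∈ unmatched s
    · rw [if_pos hm]
      exact P.next_lt_of_unmatched ⟨I1, I2, I3, I4⟩ hm
    · rw [if_neg hm]; exact I3 m
  · intro m w w' hw hw'
    rcases P.step_held_cases hw with hp | hh <;> rcases P.step_held_cases hw' with hp' | hh'
    · obtain ⟨-, ht⟩ := (P.mem_proposers).mp hp
      obtain ⟨-, ht'⟩ := (P.mem_proposers).mp hp'
      rw [← ht, ← ht']
    · exact absurd ((P.mem_proposers).mp hp).1 (not_unmatched_of_held hh')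
    · exact absurd ((P.mem_proposers).mp hp').1 (not_unmatched_of_held hh)
    · exact I4 m w w' hh hh'

lemma stateAt_succ (k : ℕ) : P.stateAt (k + 1) = P.step (P.stateAt k) :=
  Function.iterate_succ_apply' _ _ _

lemma inv_stateAt (k : ℕ) : P.Inv (P.stateAt k) := by
  induction k with
  | zero =>
    refine ⟨?_, ?_, ?_, ?_⟩ <;> intro m <;>
      simp [stateAt, initState]
  | succ k ih =>
    rw [stateAt_succ]
    exact P.inv_step ih

end Profile
namespace Profile

variable {n : ℕ} (P : Profile n)

lemma step_of_empty {s : DAState n} (h : unmatched s = ∅) : P.step s = s := by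
  have hprop : ∀ w, P.proposers s w = ∅ := by
    intro w; rw [proposers, h, Finset.filter_empty]
  obtain ⟨nx, hd⟩ := s
  have h1 : (P.step ⟨nx, hd⟩).next = nx := by
    funext m
    rw [step_next, h, if_neg (Finset.notMem_empty m)]
  have h2 : (P.step ⟨nx, hd⟩).held = hd := by
    funext w
    show ((P.proposers ⟨nx, hd⟩ w ∪ (hd w).toFinset).toList).argmin (P.wrank w) = hd w
    rw [hprop w, Finset.empty_union]
    cases hw : hd w with
    | none => simp
    | some a => simp [List.argmin_singleton]
  calc P.step ⟨nx, hd⟩ = ⟨(P.step ⟨nx, hd⟩).next, (P.step ⟨nx, hd⟩).held⟩ := rfl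
    _ = ⟨nx, hd⟩ := by rw [h1, h2]

lemma stateAt_add_of_empty {k : ℕ} (h : unmatched (P.stateAt k) = ∅) (j : ℕ) :
    P.stateAt (k + j) = P.stateAt k := by
  induction j with
  | zero => rfl
  | succ j ih => rw [← Nat.add_assoc, stateAt_succ, ih, P.step_of_empty h]

lemma sum_next_step (s : DAState n) :
    ∑ m : Fin n, (P.step s).next m = (∑ m : Fin n, s.next m) + (unmatched s).card := by
  have : ∀ m : Fin n, (P.step s).next m = s.next m + (if m ∈ unmatched s then 1 else 0) := by
    intro m; rw [step_next]; split <;> simp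
  simp only [this, Finset.sum_add_distrib]
  congr 1
  rw [Finset.sum_ite_mem, Finset.univ_inter, Finset.card_eq_sum_ones]

lemma sum_next_le (k : ℕ) : ∑ m : Fin n, (P.stateAt k).next m ≤ n * n := by
  calc ∑ m : Fin n, (P.stateAt k).next m ≤ ∑ _m : Fin n, n :=
        Finset.sum_le_sum fun m _ => (P.inv_stateAt k).2.2.1 m
    _ = n * n := by simp [Finset.sum_const, Finset.card_univ, Nat.mul_comm]

lemma le_sum_next (k : ℕ) (h : ∀ j < k, (unmatched (P.stateAt j)).Nonempty) :
    k ≤ ∑ m : Fin n, (P.stateAt k).next m := by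
  induction k with
  | zero => exact Nat.zero_le _
  | succ k ih =>
    rw [stateAt_succ, sum_next_step]
    have h1 : 1 ≤ (unmatched (P.stateAt k)).card :=
      Finset.Nonempty.card_pos (h k (Nat.lt_succ_self k))
    have h2 := ih fun j hj => h j (Nat.lt_succ_of_lt hj)
    omega

lemma exists_empty : ∃ k ≤ n * n, unmatched (P.stateAt k) = ∅ := by
  by_contra hc
  push_neg at hc
  have h : ∀ j < n * n + 1, (unmatched (P.stateAt j)).Nonempty := by
    intro j hj
    exact hc j (by omega)
  have := P.le_sum_next (n * n + 1) h
  have := P.sum_next_le (n * n + 1)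
  omega

/-- number of unmatched men is at most number of women holding nobody -/
lemma card_unmatched_le {s : DAState n} (hI : P.Inv s) :
    (unmatched s).card ≤ (Finset.univ.filter fun w : Fin n => s.held w = none).card := by
  classical
  set A := Finset.univ.filter fun w : Fin n => (s.held w).isSome with hA
  set N := Finset.univ.filter fun w : Fin n => s.held w = none with hN
  set M := Finset.univ.filter fun m : Fin n => ∃ w, s.held w = some m with hM
  have key : ∀ w ∈ A, s.held w = some ((s.held w).getD w) := by
    intro w hw
    have : (s.held w).isSome := (Finset.mem_filter.mp hw).2
    cases h : s.held w with
    | none => rw [h] at this; simp at this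
    | some a => simp
  have hAM : A.card ≤ M.card := by
    apply Finset.card_le_card_of_injOn (fun w => (s.held w).getD w)
    · intro w hw
      rw [hM, Finset.mem_coe, Finset.mem_filter]
      exact ⟨Finset.mem_univ _, ⟨w, key w hw⟩⟩
    · intro w hw w' hw' he
      simp only at he
      exact hI.2.2.2 _ w w'
        (by rw [key w (Finset.mem_coe.mp hw), he]) (key w' (Finset.mem_coe.mp hw'))
  have hNA : N.card + A.card = n := by
    have := Finset.card_filter_add_card_filter_not
      (s := (Finset.univ : Finset (Fin n))) (p := fun w => (s.held w).isSome)
    rw [Finset.card_univ, Fintype.card_fin] at this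
    have he : (Finset.univ.filter fun w : Fin n => ¬(s.held w).isSome) = N := by
      apply Finset.filter_congr
      intro w _
      simp [Option.not_isSome_iff_eq_none]
    rw [he, ← hA] at this
    omega
  have hUM : (unmatched s).card + M.card = n := by
    have := Finset.card_filter_add_card_filter_not
      (s := (Finset.univ : Finset (Fin n))) (p := fun m : Fin n => ∃ w, s.held w = some m)
    rw [Finset.card_univ, Fintype.card_fin] at this
    have he : (Finset.univ.filter fun m : Fin n => ¬∃ w, s.held w = some m) = unmatched s := by
      apply Finset.filter_congr
      intro m _
      push_neg
      rfl
    rw [he, ← hM] at this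
    omega
  omega

end Profile
namespace Profile

variable {n : ℕ} (P : Profile n)

/-- if `t` women are unheld, every man has made at most `n - t` proposals -/
lemma next_add_card_none_le {s : DAState n} (hI : P.Inv s) (m : Fin n) :
    s.next m + (Finset.univ.filter fun w : Fin n => s.held w = none).card ≤ n := by
  classical
  set N := Finset.univ.filter fun w : Fin n => s.held w = none with hN
  have hle : ∀ w ∈ N, s.next m ≤ P.mrank m w := by
    intro w hw
    by_contra hc
    push_neg at hc
    obtain ⟨m', hm', -⟩ := hI.1 m w hc
    have : s.held w = none := (Finset.mem_filter.mp hw).2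
    rw [this] at hm'
    exact Option.some_ne_none m' hm'.symm
  have himg : N.image (P.mrank m) ⊆ Finset.Ico (s.next m) n := by
    intro j hj
    obtain ⟨w, hw, rfl⟩ := Finset.mem_image.mp hj
    exact Finset.mem_Ico.mpr ⟨hle w hw, P.mrank_lt m w⟩
  have hcard : (N.image (P.mrank m)).card = N.card := by
    apply Finset.card_image_of_injOn
    intro w hw w' hw' he
    exact P.mrank_inj he
  have := Finset.card_le_card himg
  rw [hcard, Nat.card_Ico] at this
  have := hI.2.2.1 m
  omega

/-- no man is ever rejected by a woman achievable for him in a stable matching -/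
lemma opt {ν : Fin n ≃ Fin n} (hst : P.Stable ν) (k : ℕ) (m : Fin n) :
    (P.stateAt k).next m ≤ P.mrank m (ν m) + 1 := by
  induction k generalizing m with
  | zero => simp [stateAt, initState]
  | succ k ih =>
    rw [stateAt_succ, step_next]
    by_cases hm : m ∈ unmatched (P.stateAt k)
    · rw [if_pos hm]
      have : (P.stateAt k).next m ≤ P.mrank m (ν m) := by
        by_contra hgt
        push_neg at hgt
        obtain ⟨m', hm', hle⟩ := (P.inv_stateAt k).1 m (ν m) hgt
        have hne : m' ≠ m := by
          rintro rfl
          exact (mem_unmatched.mp hm _) hm'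
        have hlt : P.wrank (ν m) m' < P.wrank (ν m) m :=
          lt_of_le_of_ne hle fun he => hne (P.wrank_inj he)
        have h2 : (P.stateAt k).next m' = P.mrank m' (ν m) + 1 :=
          (P.inv_stateAt k).2.1 m' (ν m) hm'
        have h3 := ih m'
        have h5 : ν m' ≠ ν m := fun he => hne (ν.injective he)
        have h6 : P.mrank m' (ν m) < P.mrank m' (ν m') := by
          have h4 : P.mrank m' (ν m) ≤ P.mrank m' (ν m') := by omega
          exact lt_of_le_of_ne h4 fun he => h5 (P.mrank_inj he).symm
        exact hst ⟨m', ν m, h6, by rw [Equiv.symm_apply_apply]; exact hlt⟩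
      omega
    · rw [if_neg hm]
      exact ih m
end Profile

open Profile

/-- If a profile satisfies MaxProp, then it has a unique stable matching. -/
theorem maxProp_implies_USM (n : ℕ) (P : Profile n) (h : P.MaxProp) :
    P.USM := by
  classical
  rcases Nat.lt_or_ge n 2 with hn | hn
  · -- trivial cases `n = 0, 1` : there is only one matching at all
    have hsub : Subsingleton (Fin n) :=
      ⟨fun a b => Fin.ext (by have := a.isLt; have := b.isLt; omega)⟩
    refine ⟨Equiv.refl (Fin n), ?_, ?_⟩
    · rintro ⟨m, w, h1, -⟩
      have hw : w = (Equiv.refl (Fin n)) m := Subsingleton.elim _ _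
      rw [hw] at h1
      exact lt_irrefl _ h1
    · intro ν _
      exact Equiv.ext fun x => Subsingleton.elim _ _
  -- main case `2 ≤ n`
  obtain ⟨k0, hk0n, hk0⟩ := P.exists_empty
  have hex : ∃ k, unmatched (P.stateAt k) = ∅ := ⟨k0, hk0⟩
  set K := Nat.find hex with hK
  have hKempty : unmatched (P.stateAt K) = ∅ := Nat.find_spec hex
  have hKle : K ≤ n * n := le_trans (Nat.find_min' hex hk0) hk0n
  have hK1 : 1 ≤ K := by
    by_contra h0
    have hKz : K = 0 := by omega
    have hem : unmatched (P.stateAt 0) = ∅ := hKz ▸ hKempty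
    have hmem : (⟨0, by omega⟩ : Fin n) ∈ unmatched (P.stateAt 0) := by
      rw [mem_unmatched]
      intro w
      simp [stateAt, initState]
    rw [hem] at hmem
    exact absurd hmem (Finset.notMem_empty _)
  set s := P.stateAt (K - 1) with hs
  have hI : P.Inv s := P.inv_stateAt _
  have hsne : (unmatched s).Nonempty :=
    Finset.nonempty_iff_ne_empty.mpr (Nat.find_min hex (show K - 1 < K by omega))
  have hstep : P.stateAt K = P.step s := by
    conv_lhs => rw [show K = (K - 1) + 1 by omega]
    exact P.stateAt_succ _
  have hfin : P.finalState = P.stateAt K := by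
    show P.stateAt (n * n + 1) = P.stateAt K
    rw [show n * n + 1 = K + (n * n + 1 - K) by omega]
    exact P.stateAt_add_of_empty hKempty _
  set N := Finset.univ.filter fun w : Fin n => s.held w = none with hNdef
  set t := N.card with ht
  set u := (unmatched s).card with hu
  have hu1 : 1 ≤ u := Finset.Nonempty.card_pos hsne
  have hut : u ≤ t := P.card_unmatched_le hI
  have htle : ∀ m : Fin n, s.next m + t ≤ n := fun m => P.next_add_card_none_le hI m
  have hnn : n ≤ n * n + 1 := le_trans (Nat.le_mul_of_pos_left n (by omega)) (Nat.le_succ _)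
  have hMax : (∑ m : Fin n, P.finalState.next m) + n = n * n + 1 := by
    have hh : (∑ m : Fin n, P.finalState.next m) = n * n + 1 - n := h
    rw [hh]
    exact Nat.sub_add_cancel hnn
  have hsum1 : ∑ m : Fin n, P.finalState.next m = (∑ m : Fin n, s.next m) + u := by
    rw [hfin, hstep]
    exact P.sum_next_step s
  rw [hsum1] at hMax
  -- hMax : ∑ s.next + u + n = n * n + 1
  have F2 : (∑ m : Fin n, s.next m) + n * t ≤ n * n := by
    calc (∑ m : Fin n, s.next m) + n * t = ∑ m : Fin n, (s.next m + t) := by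
          rw [Finset.sum_add_distrib, Finset.sum_const, Finset.card_univ, Fintype.card_fin,
            smul_eq_mul]
      _ ≤ ∑ _m : Fin n, n := Finset.sum_le_sum fun i _ => htle i
      _ = n * n := by
          rw [Finset.sum_const, Finset.card_univ, Fintype.card_fin, smul_eq_mul]
  have F5 : t ≤ n := by
    rw [ht, hNdef]
    exact le_trans (Finset.card_filter_le _ _) (by rw [Finset.card_univ, Fintype.card_fin])
  have ht1 : t = 1 := by
    by_contra h2t
    have h2t' : 2 ≤ t := by omega
    have hnt : n * 2 ≤ n * t := Nat.mul_le_mul_left n h2t'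
    generalize hQ : n * n = Q at hMax F2
    generalize hR : n * t = R at hnt F2
    omega
  have hu' : u = 1 := by omega
  rw [hu'] at hMax
  rw [ht1] at htle
  -- every man has made exactly `n - 1` proposals at the second-to-last state
  have hallnext : ∀ m : Fin n, s.next m = n - 1 := by
    by_contra hc
    push_neg at hc
    obtain ⟨mx, hmx⟩ := hc
    have hlt : (∑ m : Fin n, s.next m) < ∑ _m : Fin n, (n - 1) := by
      apply Finset.sum_lt_sum (fun i _ => by have := htle i; omega)
      exact ⟨mx, Finset.mem_univ _, by have := htle mx; omega⟩
    rw [Finset.sum_const, Finset.card_univ, Fintype.card_fin, smul_eq_mul] at hlt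
    have hmp : n * (n - 1) + n = n * n := by
      calc n * (n - 1) + n = n * ((n - 1) + 1) := (Nat.mul_succ _ _).symm
        _ = n * n := by rw [Nat.sub_add_cancel (by omega)]
    generalize hQ : n * n = Q at hMax hmp
    generalize hR : n * (n - 1) = R at hlt hmp
    omega
  -- the unique woman `w0` nobody has proposed to, and the unique unmatched man `m0`
  obtain ⟨w0, hw0⟩ := Finset.card_eq_one.mp ht1
  have hw0none : s.held w0 = none := by
    have : w0 ∈ N := hw0 ▸ Finset.mem_singleton_self w0
    exact (Finset.mem_filter.mp this).2
  have hw0rank : ∀ m : Fin n, P.mrank m w0 = n - 1 := by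
    intro m
    have h1 : s.next m ≤ P.mrank m w0 := by
      by_contra hcc
      push_neg at hcc
      obtain ⟨m', hm', -⟩ := hI.1 m w0 hcc
      rw [hw0none] at hm'
      exact Option.some_ne_none m' hm'.symm
    have h2 := P.mrank_lt m w0
    have h3 := hallnext m
    omega
  obtain ⟨m0, hm0⟩ := Finset.card_eq_one.mp hu'
  -- final proposal counts
  have hFnext : ∀ m : Fin n, P.finalState.next m = if m = m0 then n else n - 1 := by
    intro m
    rw [hfin, hstep, P.step_next, hm0]
    by_cases hmm : m = m0
    · rw [if_pos (Finset.mem_singleton.mpr hmm), if_pos hmm, hallnext]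
      omega
    · rw [if_neg (fun hc => hmm (Finset.mem_singleton.mp hc)), if_neg hmm, hallnext]
  have hFInv : P.Inv P.finalState := P.inv_stateAt (n * n + 1)
  have hFne : unmatched P.finalState = ∅ := by rw [hfin]; exact hKempty
  have hmatchedF : ∀ m : Fin n, ∃ w, P.finalState.held w = some m := by
    intro m
    by_contra hc
    push_neg at hc
    have : m ∈ unmatched P.finalState := mem_unmatched.mpr hc
    rw [hFne] at this
    exact absurd this (Finset.notMem_empty m)
  -- the final matching
  set μf : Fin n → Fin n := fun m =>
    if m = m0 then w0 else P.mpref m ⟨n - 2, by omega⟩ with hμf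
  have hheld : ∀ m : Fin n, P.finalState.held (μf m) = some m := by
    intro m
    obtain ⟨w, hw⟩ := hmatchedF m
    have h2 := hFInv.2.1 m w hw
    rw [hFnext] at h2
    by_cases hmm : m = m0
    · rw [if_pos hmm] at h2
      have h3 : P.mrank m w = n - 1 := by omega
      have hww : w = w0 := P.mrank_inj (by rw [h3, hw0rank])
      rw [hμf]
      simp only [if_pos hmm]
      rw [← hww]
      exact hw
    · rw [if_neg hmm] at h2
      have h3 : P.mrank m w = n - 2 := by omega
      have hww : P.mpref m ⟨n - 2, by omega⟩ = w := P.mpref_eq_of_mrank (by omega) h3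
      rw [hμf]
      simp only [if_neg hmm]
      rw [hww]
      exact hw
  have hinj : Function.Injective μf := by
    intro a b hab
    have ha := hheld a
    rw [hab, hheld b] at ha
    exact (Option.some_injective _ ha).symm
  set ν0 := Equiv.ofBijective μf (Finite.injective_iff_bijective.mp hinj) with hν0
  have hν0app : ∀ m, ν0 m = μf m := fun m => rfl
  have hranks : ∀ m : Fin n, P.mrank m (μf m) = if m = m0 then n - 1 else n - 2 := by
    intro m
    by_cases hmm : m = m0
    · rw [hμf]
      simp only [if_pos hmm]
      rw [hw0rank]
    · rw [hμf]
      simp only [if_neg hmm]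
      rw [P.mrank_mpref]
  -- every woman other than w0 is matched to her overall favourite man
  have hwmin : ∀ w : Fin n, w ≠ w0 → ∀ m : Fin n, P.wrank w (ν0.symm w) ≤ P.wrank w m := by
    intro w hw m
    have hlt : P.mrank m w < P.finalState.next m := by
      have h1 : P.mrank m w ≠ n - 1 := fun he => hw (P.mrank_inj (by rw [he, hw0rank]))
      have h2 := P.mrank_lt m w
      rw [hFnext]
      split <;> omega
    obtain ⟨m', hm', hle⟩ := hFInv.1 m w hlt
    have hsymm : P.finalState.held w = some (ν0.symm w) := by
      have hh := hheld (ν0.symm w)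
      rwa [show μf (ν0.symm w) = w from ν0.apply_symm_apply w] at hh
    rw [hsymm] at hm'
    have he : ν0.symm w = m' := Option.some_injective _ hm'
    rw [he]
    exact hle
  -- ν0 is stable
  have hstable : P.Stable ν0 := by
    rintro ⟨m, w, h1, h2⟩
    by_cases hww : w = w0
    · rw [hww] at h1
      have h1' : P.mrank m w0 < P.mrank m (μf m) := h1
      have ha := hranks m
      have hb := hw0rank m
      split at ha <;> omega
    · have hmin := hwmin w hww m
      have h2' : P.wrank w m < P.wrank w (ν0.symm w) := h2
      omega
  -- ν0 is the unique stable matching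
  refine ⟨ν0, hstable, ?_⟩
  intro ν hν
  have hopt : ∀ m : Fin n, P.finalState.next m ≤ P.mrank m (ν m) + 1 :=
    fun m => P.opt hν (n * n + 1) m
  have hm0ν : ν m0 = w0 := by
    have h1 := hopt m0
    rw [hFnext, if_pos rfl] at h1
    have h2 := P.mrank_lt m0 (ν m0)
    have h3 : P.mrank m0 (ν m0) = n - 1 := by omega
    exact P.mrank_inj (by rw [h3, hw0rank])
  have hall : ∀ m : Fin n, ν m = μf m := by
    intro m
    by_cases hmm : m = m0
    · rw [hmm, hm0ν]
      simp [hμf]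
    · have h1 := hopt m
      rw [hFnext, if_neg hmm] at h1
      have h2 : P.mrank m (ν m) ≠ n - 1 := by
        intro he
        have hvm : ν m = w0 := P.mrank_inj (by rw [he, hw0rank])
        exact hmm (ν.injective (by rw [hvm, hm0ν]))
      have h3 := P.mrank_lt m (ν m)
      have h4 : P.mrank m (ν m) = n - 2 := by omega
      have h5 := hranks m
      rw [if_neg hmm] at h5
      exact P.mrank_inj (by rw [h4, h5])
  exact Equiv.ext fun m => by rw [hall m]; rfl
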